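/- Let S and R be finite sets, N a real S×R matrix, c̄ ∈ ℝ^S strictly positive, k ∈ ℝ^R with nonnegative entries, and let A = −diag(c̄)⁻¹ · N · diag(k) · Nᵀ. If A is normal (A·Aᵀ = Aᵀ·A), then for all i, o ∈ S and all t ≥ 0, |(e^{tA})_{oi}| ≤ 1. -/

import Mathlib

open Matrix NormedSpace

/-- For a real symmetric negative-semidefinite matrix `M`, every entry of `exp ℝ M`
has absolute value at most `1`. -/
lemma abs_exp_entry_le_one {n : Type*} [Fintype n] [DecidableEq n]
    (M : Matrix n n ℝ) (hM : M.IsHermitian) (hns : (-M).PosSemidef) (o i : n) :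
    |NormedSpace.exp M o i| ≤ 1 := by
  classical
  set U : Matrix n n ℝ := (hM.eigenvectorUnitary : Matrix n n ℝ) with hU
  have hUmem := hM.eigenvectorUnitary.2
  have hUstar : U * star U = 1 := (Matrix.mem_unitaryGroup_iff).mp hUmem
  have hUstar' : star U * U = 1 := (Matrix.mem_unitaryGroup_iff').mp hUmem
  have hUinv : U⁻¹ = star U := Matrix.inv_eq_right_inv hUstar
  -- eigenvalues are nonpositive
  have hev : ∀ j, hM.eigenvalues j ≤ 0 := by
    intro j
    have h1 := hM.eigenvalues_eq j
    have h2 := hns.re_dotProduct_nonneg (⇑(hM.eigenvectorBasis j))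
    simp only [RCLike.re_to_real] at h1 h2
    have : (-M) *ᵥ ⇑(hM.eigenvectorBasis j) = -(M *ᵥ ⇑(hM.eigenvectorBasis j)) := by
      simp [Matrix.neg_mulVec]
    rw [this, dotProduct_neg] at h2
    linarith [h1, h2]
  -- spectral decomposition of the exponential
  have hspec : M = U * Matrix.diagonal (RCLike.ofReal ∘ hM.eigenvalues) * U⁻¹ := by
    rw [hUinv]; exact hM.spectral_theorem
  have hexp : NormedSpace.exp M = U * Matrix.diagonal (fun j => Real.exp (hM.eigenvalues j)) * star U := by
    have hUunit : IsUnit U := ⟨⟨U, star U, hUstar, hUstar'⟩, rfl⟩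
    have hconj := congrArg NormedSpace.exp hspec
    rw [hconj, Matrix.exp_conj U (Matrix.diagonal (RCLike.ofReal ∘ hM.eigenvalues)) hUunit,
      Matrix.exp_diagonal, hUinv]
    congr 2
    funext j
    simp [Pi.exp_def, Real.exp_eq_exp_ℝ]
  -- entrywise estimate
  have hentry : NormedSpace.exp M o i =
      ∑ j, U o j * Real.exp (hM.eigenvalues j) * U i j := by
    rw [hexp]
    simp only [Matrix.mul_apply, Matrix.diagonal_apply, star_apply, star_trivial,
      Finset.sum_mul, mul_ite, mul_zero, ite_mul, zero_mul, Finset.sum_ite_eq,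
      Finset.sum_ite_eq', Finset.mem_univ, if_true]
  rw [hentry]
  have h1 : |∑ j, U o j * Real.exp (hM.eigenvalues j) * U i j| ≤
      ∑ j, |U o j| * |U i j| := by
    refine (Finset.abs_sum_le_sum_abs _ _).trans ?_
    apply Finset.sum_le_sum
    intro j _
    have he : Real.exp (hM.eigenvalues j) ≤ 1 := Real.exp_le_one_iff.mpr (hev j)
    have he' : 0 < Real.exp (hM.eigenvalues j) := Real.exp_pos _
    calc |U o j * Real.exp (hM.eigenvalues j) * U i j|
        = |U o j| * Real.exp (hM.eigenvalues j) * |U i j| := by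
          rw [abs_mul, abs_mul, abs_of_pos he']
      _ ≤ |U o j| * 1 * |U i j| := by
          apply mul_le_mul_of_nonneg_right _ (abs_nonneg _)
          exact mul_le_mul_of_nonneg_left he (abs_nonneg _)
      _ = |U o j| * |U i j| := by ring
  refine h1.trans ?_
  -- Cauchy–Schwarz with unit rows
  have hrow : ∀ a : n, ∑ j, U a j ^ 2 = 1 := by
    intro a
    have := congrArg (fun (X : Matrix n n ℝ) => X a a) hUstar
    simpa [Matrix.mul_apply, star_apply, pow_two] using this
  have hcs := Finset.sum_mul_sq_le_sq_mul_sq Finset.univ (fun j => |U o j|) (fun j => |U i j|)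
  simp only [sq_abs] at hcs
  rw [hrow o, hrow i, mul_one] at hcs
  have hnn : 0 ≤ ∑ j, |U o j| * |U i j| :=
    Finset.sum_nonneg fun j _ => mul_nonneg (abs_nonneg _) (abs_nonneg _)
  nlinarith [hcs, hnn]

/-- Remark 4.2: upper bound on the Sensitivity for normal systems. If
`A = −diag(c̄)⁻¹ N diag(k) Nᵀ` (with `c̄ > 0`, `k ≥ 0`) is normal, then
`|(e^{tA})_{oi}| ≤ 1` for all `t ≥ 0`. -/
theorem sensitivity_upper_bound_normal
    {S R : Type*} [Fintype S] [Fintype R] [DecidableEq S] [DecidableEq R]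
    (N : Matrix S R ℝ) (cbar : S → ℝ) (k : R → ℝ)
    (hcbar : ∀ s, 0 < cbar s) (hk : ∀ r, 0 ≤ k r)
    (A : Matrix S S ℝ)
    (hA : A = -(Matrix.diagonal (fun s => (cbar s)⁻¹) * N * Matrix.diagonal k * Nᵀ))
    (hnormal : A * Aᵀ = Aᵀ * A) :
    ∀ (i o : S) (t : ℝ), 0 ≤ t → |NormedSpace.exp (t • A) o i| ≤ 1 := by
  intro i o t ht
  classical
  -- entrywise formula for A
  have hAentry : ∀ p q, A p q = -((cbar p)⁻¹ * ∑ r, N p r * k r * N q r) := by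
    intro p q
    rw [hA]
    simp only [Matrix.neg_apply, neg_inj, Matrix.mul_apply, Matrix.diagonal_apply,
      Matrix.transpose_apply, ite_mul, zero_mul, mul_ite, mul_zero,
      Finset.sum_ite_eq, Finset.sum_ite_eq', Finset.mem_univ, if_true]
    rw [Finset.mul_sum]
    exact Finset.sum_congr rfl fun r _ => by ring
  -- basic detailed-balance-type relation
  have hrel : ∀ p q, cbar p * A p q = cbar q * A q p := by
    intro p q
    rw [hAentry p q, hAentry q p, mul_neg, mul_neg, ← mul_assoc,
      mul_inv_cancel₀ (hcbar p).ne', one_mul, ← mul_assoc,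
      mul_inv_cancel₀ (hcbar q).ne', one_mul]
    congr 1
    apply Finset.sum_congr rfl
    intro r _
    ring
  have hswap : ∀ p q, A q p = cbar p * A p q / cbar q := by
    intro p q
    rw [eq_div_iff (hcbar q).ne']
    linear_combination -(hrel p q)
  -- diagonal of the normality condition
  have hdiag : ∀ p, ∑ l, (A p l) ^ 2 = ∑ l, (A l p) ^ 2 := by
    intro p
    have h := congrFun (congrFun hnormal p) p
    simpa [Matrix.mul_apply, Matrix.transpose_apply, pow_two] using h
  have E1 : ∀ p, ∑ l, (A p l) ^ 2 * ((cbar p) ^ 2 / (cbar l) ^ 2 - 1) = 0 := by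
    intro p
    have h2 : ∀ l, (A l p) ^ 2 = (A p l) ^ 2 * ((cbar p) ^ 2 / (cbar l) ^ 2) := by
      intro l
      rw [hswap p l]
      field_simp
    calc ∑ l, (A p l) ^ 2 * ((cbar p) ^ 2 / (cbar l) ^ 2 - 1)
        = ∑ l, ((A l p) ^ 2 - (A p l) ^ 2) := by
          apply Finset.sum_congr rfl
          intro l _
          rw [h2 l]; ring
      _ = 0 := by rw [Finset.sum_sub_distrib, hdiag p, sub_self]
  have hsq : ∀ p l, (cbar l) ^ 2 * (A l p) ^ 2 = (cbar p) ^ 2 * (A p l) ^ 2 := by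
    intro p l
    have h := hrel p l
    calc (cbar l) ^ 2 * (A l p) ^ 2 = (cbar l * A l p) ^ 2 := by ring
      _ = (cbar p * A p l) ^ 2 := by rw [← h]
      _ = (cbar p) ^ 2 * (A p l) ^ 2 := by ring
  have F1 : ∑ p, ∑ l, (cbar p) ^ 2 * ((A p l) ^ 2 * ((cbar p) ^ 2 / (cbar l) ^ 2 - 1)) = 0 := by
    apply Finset.sum_eq_zero
    intro p _
    rw [← Finset.mul_sum, E1 p, mul_zero]
  have F2 : ∑ p, ∑ l, (cbar p) ^ 2 * ((A p l) ^ 2 * ((cbar l) ^ 2 / (cbar p) ^ 2 - 1)) = 0 := by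
    calc ∑ p, ∑ l, (cbar p) ^ 2 * ((A p l) ^ 2 * ((cbar l) ^ 2 / (cbar p) ^ 2 - 1))
        = ∑ p, ∑ l, (cbar l) ^ 2 * ((A l p) ^ 2 * ((cbar l) ^ 2 / (cbar p) ^ 2 - 1)) := by
          apply Finset.sum_congr rfl; intro p _
          apply Finset.sum_congr rfl; intro l _
          have := hsq p l
          linear_combination (1 - (cbar l) ^ 2 / (cbar p) ^ 2) * this
      _ = ∑ l, ∑ p, (cbar l) ^ 2 * ((A l p) ^ 2 * ((cbar l) ^ 2 / (cbar p) ^ 2 - 1)) :=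
          Finset.sum_comm
      _ = 0 := F1
  have E : ∑ p, ∑ l, (cbar p * A p l) ^ 2 *
      ((cbar p) ^ 2 / (cbar l) ^ 2 + (cbar l) ^ 2 / (cbar p) ^ 2 - 2) = 0 := by
    have : ∀ p l : S, (cbar p * A p l) ^ 2 *
        ((cbar p) ^ 2 / (cbar l) ^ 2 + (cbar l) ^ 2 / (cbar p) ^ 2 - 2)
        = (cbar p) ^ 2 * ((A p l) ^ 2 * ((cbar p) ^ 2 / (cbar l) ^ 2 - 1))
          + (cbar p) ^ 2 * ((A p l) ^ 2 * ((cbar l) ^ 2 / (cbar p) ^ 2 - 1)) := by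
      intro p l; ring
    simp only [this]
    rw [Finset.sum_congr rfl (fun p _ => Finset.sum_add_distrib), Finset.sum_add_distrib,
      F1, F2, add_zero]
  -- nonnegativity of each summand
  have hfac : ∀ p l : S, (cbar p) ^ 2 / (cbar l) ^ 2 + (cbar l) ^ 2 / (cbar p) ^ 2 - 2
      = (cbar p / cbar l - cbar l / cbar p) ^ 2 := by
    intro p l
    have hp := (hcbar p).ne'
    have hl := (hcbar l).ne'
    field_simp
    ring
  have hnn : ∀ p l : S, 0 ≤ (cbar p * A p l) ^ 2 *
      ((cbar p) ^ 2 / (cbar l) ^ 2 + (cbar l) ^ 2 / (cbar p) ^ 2 - 2) := by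
    intro p l
    rw [hfac p l]
    exact mul_nonneg (sq_nonneg _) (sq_nonneg _)
  have hterm : ∀ p l : S, (cbar p * A p l) ^ 2 *
      ((cbar p) ^ 2 / (cbar l) ^ 2 + (cbar l) ^ 2 / (cbar p) ^ 2 - 2) = 0 := by
    intro p l
    have houter := (Finset.sum_eq_zero_iff_of_nonneg
      (fun p _ => Finset.sum_nonneg (fun l _ => hnn p l))).mp E p (Finset.mem_univ p)
    exact (Finset.sum_eq_zero_iff_of_nonneg (fun l _ => hnn p l)).mp houter l (Finset.mem_univ l)
  -- A p q vanishes unless cbar p = cbar q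
  have hzero : ∀ p q, A p q ≠ 0 → cbar p = cbar q := by
    intro p q hApq
    rcases mul_eq_zero.mp (hterm p q) with h | h
    · exact absurd (pow_eq_zero_iff two_ne_zero |>.mp h)
        (mul_ne_zero (hcbar p).ne' hApq)
    · -- the scalar factor vanishes, forcing cbar p = cbar q
      have hp := hcbar p
      have hq := hcbar q
      have h2 : ((cbar p) ^ 2 - (cbar q) ^ 2) ^ 2 = 0 := by
        have hcomp : ((cbar p) ^ 2 - (cbar q) ^ 2) ^ 2 =
            ((cbar p) ^ 2 / (cbar q) ^ 2 + (cbar q) ^ 2 / (cbar p) ^ 2 - 2)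
              * ((cbar p) ^ 2 * (cbar q) ^ 2) := by
          field_simp
          ring
        rw [hcomp, h, zero_mul]
      have h3 : (cbar p) ^ 2 = (cbar q) ^ 2 := by
        have := sq_eq_zero_iff.mp h2
        linarith
      rcases mul_eq_zero.mp (show (cbar p - cbar q) * (cbar p + cbar q) = 0 by
        linear_combination h3) with h4 | h4
      · linarith
      · linarith
  -- A is symmetric
  have hAsymm : Aᵀ = A := by
    ext p q
    rw [Matrix.transpose_apply]
    by_cases hApq : A p q = 0
    · by_cases hAqp : A q p = 0
      · rw [hApq, hAqp]
      · exfalso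
        have h := hrel q p
        rw [hApq, mul_zero] at h
        rcases mul_eq_zero.mp h with h' | h'
        · exact (hcbar q).ne' h'
        · exact hAqp h'
    · have hc := hzero p q hApq
      have h := hrel p q
      rw [hc] at h
      exact (mul_left_cancel₀ (hcbar q).ne' h).symm
  -- factorization showing -(t • A) is positive semidefinite
  set L : Matrix S R ℝ :=
    Matrix.of (fun p r => N p r * Real.sqrt (k r) / Real.sqrt (cbar p)) with hL
  have hLA : -(t • A) = (Real.sqrt t • L) * (Real.sqrt t • L)ᵀ := by
    ext p q
    simp only [Matrix.neg_apply, Matrix.smul_apply, Matrix.mul_apply, Matrix.transpose_apply,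
      smul_eq_mul, Matrix.of_apply, hL]
    have hsum : ∑ r, Real.sqrt t * (N p r * Real.sqrt (k r) / Real.sqrt (cbar p)) *
        (Real.sqrt t * (N q r * Real.sqrt (k r) / Real.sqrt (cbar q)))
        = t / (Real.sqrt (cbar p) * Real.sqrt (cbar q)) * ∑ r, N p r * k r * N q r := by
      rw [Finset.mul_sum]
      apply Finset.sum_congr rfl
      intro r _
      have h1 : Real.sqrt t * Real.sqrt t = t := Real.mul_self_sqrt ht
      have h2 : Real.sqrt (k r) * Real.sqrt (k r) = k r := Real.mul_self_sqrt (hk r)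
      calc Real.sqrt t * (N p r * Real.sqrt (k r) / Real.sqrt (cbar p)) *
            (Real.sqrt t * (N q r * Real.sqrt (k r) / Real.sqrt (cbar q)))
          = (Real.sqrt t * Real.sqrt t) *
              ((Real.sqrt (k r) * Real.sqrt (k r)) * (N p r * N q r))
              / (Real.sqrt (cbar p) * Real.sqrt (cbar q)) := by ring
        _ = t / (Real.sqrt (cbar p) * Real.sqrt (cbar q)) * (N p r * k r * N q r) := by
            rw [h1, h2]; ring
    rw [hsum]
    by_cases hApq : A p q = 0
    · have hC : ∑ r, N p r * k r * N q r = 0 := by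
        have h := hAentry p q
        rw [hApq] at h
        have h' : (cbar p)⁻¹ * ∑ r, N p r * k r * N q r = 0 := by linarith [neg_eq_zero.mp h.symm]
        rcases mul_eq_zero.mp h' with h'' | h''
        · exact absurd h'' (inv_ne_zero (hcbar p).ne')
        · exact h''
      rw [hApq, hC]
      simp
    · have hc := hzero p q hApq
      rw [hAentry p q, hc]
      rw [Real.mul_self_sqrt (hcbar q).le]
      ring
  have hAh : A.IsHermitian := by
    show Aᴴ = A
    rw [Matrix.conjTranspose_eq_transpose_of_trivial, hAsymm]
  have hHt : (t • A).IsHermitian := by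
    show (t • A)ᴴ = t • A
    rw [Matrix.conjTranspose_eq_transpose_of_trivial, Matrix.transpose_smul, hAsymm]
  have hPSD : (-(t • A)).PosSemidef := by
    rw [hLA]
    have h := Matrix.posSemidef_self_mul_conjTranspose (Real.sqrt t • L)
    rwa [Matrix.conjTranspose_eq_transpose_of_trivial] at h
  exact abs_exp_entry_le_one (t • A) hHt hPSD o i
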